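/- Let M be a real m×m Hurwitz matrix, let μ > 0, and let P be the symmetric positive definite solution of P·M + Mᵀ·P = −2μ·I_m. Let κ be a real constant with 0 ≤ κ < 2μ, and let e : [0,∞) → ℝ^m be a differentiable function satisfying e′(t) = M·e(t) + g(t) for all t ≥ 0, where g : [0,∞) → ℝ^m satisfies ⟨e(t), P·g(t)⟩ ≤ (κ/2)·‖e(t)‖² for all t ≥ 0. Then the Lyapunov function V(t) = ⟨e(t), P·e(t)⟩ satisfies V(t) ≤ exp( ((κ − 2μ)/λ_max(P)) · t ) · V(0) for all t ≥ 0; in particular e(t) → 0 exponentially as t → ∞. -/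

import Mathlib

open Matrix

/-- A real square matrix is Hurwitz if every eigenvalue of its complexification
has strictly negative real part. -/
def IsHurwitz {m : Type*} [Fintype m] [DecidableEq m] (M : Matrix m m ℝ) : Prop :=
  ∀ z ∈ spectrum ℂ (M.map Complex.ofReal), z.re < 0

/-- The largest eigenvalue of a (symmetric) real matrix, expressed as the
supremum of its real spectrum. -/
noncomputable def maxEig {n : ℕ} (M : Matrix (Fin n) (Fin n) ℝ) : ℝ :=
  sSup (spectrum ℝ M)

lemma symm_shift {m : ℕ} (P : Matrix (Fin m) (Fin m) ℝ) (hP : P.IsHermitian)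
    (v w : Fin m → ℝ) : v ⬝ᵥ P.mulVec w = (P.mulVec v) ⬝ᵥ w := by
  rw [dotProduct_mulVec, ← mulVec_transpose, ← conjTranspose_eq_transpose_of_trivial, hP.eq]

lemma quad_expand {m : ℕ} (P : Matrix (Fin m) (Fin m) ℝ) (hP : P.IsHermitian)
    (x : Fin m → ℝ) :
    x ⬝ᵥ P.mulVec x = ∑ i, hP.eigenvalues i * ((hP.eigenvectorBasis i : Fin m → ℝ) ⬝ᵥ x)^2 ∧
    x ⬝ᵥ x = ∑ i, ((hP.eigenvectorBasis i : Fin m → ℝ) ⬝ᵥ x)^2 := by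
  classical
  set b := hP.eigenvectorBasis with hb
  have key : ∀ y : Fin m → ℝ, (x ⬝ᵥ y : ℝ)
      = ∑ i, ((b i : Fin m → ℝ) ⬝ᵥ x) * ((b i : Fin m → ℝ) ⬝ᵥ y) := by
    intro y
    have h2 := b.sum_inner_mul_inner (𝕜 := ℝ) (WithLp.toLp 2 x : EuclideanSpace ℝ (Fin m)) (WithLp.toLp 2 y : EuclideanSpace ℝ (Fin m))
    simp only [PiLp.inner_apply, RCLike.inner_apply, starRingEnd_apply, star_trivial] at h2
    have comm : ∀ i : Fin m, (∑ j, y j * (b i : Fin m → ℝ) j) = ∑ j, (b i : Fin m → ℝ) j * y j :=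
      fun i => Finset.sum_congr rfl (fun j _ => mul_comm _ _)
    simp_rw [comm] at h2
    simp only [dotProduct]
    rw [h2]; exact Finset.sum_congr rfl fun j _ => mul_comm _ _
  constructor
  · rw [key (P.mulVec x)]
    refine Finset.sum_congr rfl fun i _ => ?_
    have : (b i : Fin m → ℝ) ⬝ᵥ P.mulVec x = hP.eigenvalues i * ((b i : Fin m → ℝ) ⬝ᵥ x) := by
      rw [symm_shift P hP,
        show P.mulVec (b i : Fin m → ℝ) = hP.eigenvalues i • (b i : Fin m → ℝ) from
          hP.mulVec_eigenvectorBasis i,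
        smul_dotProduct, smul_eq_mul]
    rw [this]; ring
  · rw [key x]; exact Finset.sum_congr rfl fun i _ => (sq _).symm

lemma quad_bounds {m : ℕ} (hm : 0 < m) (P : Matrix (Fin m) (Fin m) ℝ) (hP : P.PosDef) :
    0 < sSup (spectrum ℝ P) ∧
    (∀ x : Fin m → ℝ, x ⬝ᵥ P.mulVec x ≤ sSup (spectrum ℝ P) * (x ⬝ᵥ x)) ∧
    0 < sInf (spectrum ℝ P) ∧
    (∀ x : Fin m → ℝ, sInf (spectrum ℝ P) * (x ⬝ᵥ x) ≤ x ⬝ᵥ P.mulVec x) := by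
  classical
  haveI : Nonempty (Fin m) := ⟨⟨0, hm⟩⟩
  have hspec : spectrum ℝ P = Set.range hP.isHermitian.eigenvalues := hP.isHermitian.spectrum_real_eq_range_eigenvalues
  have hfin : (Set.range hP.isHermitian.eigenvalues).Finite := Set.finite_range _
  have hne : (Set.range hP.isHermitian.eigenvalues).Nonempty := Set.range_nonempty _
  have hSmem : sSup (spectrum ℝ P) ∈ Set.range hP.isHermitian.eigenvalues := by
    rw [hspec]; exact hne.csSup_mem hfin
  have hImem : sInf (spectrum ℝ P) ∈ Set.range hP.isHermitian.eigenvalues := by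
    rw [hspec]; exact hne.csInf_mem hfin
  have hpos : ∀ i, 0 < hP.isHermitian.eigenvalues i := hP.eigenvalues_pos
  obtain ⟨iS, hiS⟩ := hSmem
  obtain ⟨iI, hiI⟩ := hImem
  have hle : ∀ i, hP.isHermitian.eigenvalues i ≤ sSup (spectrum ℝ P) := by
    intro i
    rw [hspec]
    exact le_csSup (hfin.bddAbove) (Set.mem_range_self i)
  have hge : ∀ i, sInf (spectrum ℝ P) ≤ hP.isHermitian.eigenvalues i := by
    intro i
    rw [hspec]
    exact csInf_le (hfin.bddBelow) (Set.mem_range_self i)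
  refine ⟨by rw [← hiS]; exact hpos iS, ?_, by rw [← hiI]; exact hpos iI, ?_⟩
  · intro x
    obtain ⟨h1, h2⟩ := quad_expand P hP.1 x
    rw [h1, h2, Finset.mul_sum]
    exact Finset.sum_le_sum fun i _ => mul_le_mul_of_nonneg_right (hle i) (sq_nonneg _)
  · intro x
    obtain ⟨h1, h2⟩ := quad_expand P hP.1 x
    rw [h1, h2, Finset.mul_sum]
    exact Finset.sum_le_sum fun i _ => mul_le_mul_of_nonneg_right (hge i) (sq_nonneg _)

lemma hasDerivAt_quad {m : ℕ} (P : Matrix (Fin m) (Fin m) ℝ) (e : ℝ → Fin m → ℝ)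
    (d : Fin m → ℝ) (t : ℝ) (he : HasDerivAt e d t) :
    HasDerivAt (fun s => e s ⬝ᵥ P.mulVec (e s))
      (d ⬝ᵥ P.mulVec (e t) + e t ⬝ᵥ P.mulVec d) t := by
  classical
  have hi : ∀ i, HasDerivAt (fun s => e s i) (d i) t := hasDerivAt_pi.1 he
  have key : HasDerivAt (fun s => ∑ i, ∑ j, e s i * (P i j * e s j))
      (∑ i, ∑ j, (d i * (P i j * e t j) + e t i * (P i j * d j))) t := by
    refine HasDerivAt.fun_sum fun i _ => ?_
    exact HasDerivAt.fun_sum fun j _ => (hi i).mul ((hi j).const_mul (P i j))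
  have hfun : (fun s => e s ⬝ᵥ P.mulVec (e s)) = fun s => ∑ i, ∑ j, e s i * (P i j * e s j) := by
    funext s
    simp [dotProduct, mulVec, Finset.mul_sum]
  have hval : d ⬝ᵥ P.mulVec (e t) + e t ⬝ᵥ P.mulVec d
      = ∑ i, ∑ j, (d i * (P i j * e t j) + e t i * (P i j * d j)) := by
    simp [dotProduct, mulVec, Finset.mul_sum, Finset.sum_add_distrib]
  rw [hfun, hval]
  exact key

lemma quad_single_le {m : ℕ} (x : Fin m → ℝ) (i : Fin m) : (x i)^2 ≤ x ⬝ᵥ x := by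
  classical
  have : (x i) * (x i) ≤ ∑ j, x j * x j :=
    Finset.single_le_sum (fun j _ => mul_self_nonneg (x j)) (Finset.mem_univ i)
  simpa [dotProduct, sq] using this

theorem lyapunov_exponential_decay {m : ℕ}
    (M P : Matrix (Fin m) (Fin m) ℝ) (hM : IsHurwitz M)
    (μ : ℝ) (hμ : 0 < μ) (hP : P.PosDef)
    (hLyap : P * M + Mᵀ * P = (-(2 * μ)) • (1 : Matrix (Fin m) (Fin m) ℝ))
    (κ : ℝ) (hκ0 : 0 ≤ κ) (hκ : κ < 2 * μ)
    (e g : ℝ → (Fin m → ℝ))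
    (he : ∀ t ≥ (0 : ℝ), HasDerivAt e (M.mulVec (e t) + g t) t)
    (hg : ∀ t ≥ (0 : ℝ), e t ⬝ᵥ P.mulVec (g t) ≤ (κ / 2) * (e t ⬝ᵥ e t)) :
    (∀ t ≥ (0 : ℝ), e t ⬝ᵥ P.mulVec (e t) ≤
        Real.exp ((κ - 2 * μ) / maxEig P * t) * (e 0 ⬝ᵥ P.mulVec (e 0))) ∧
    Filter.Tendsto e Filter.atTop (nhds 0) := by
  classical
  rcases Nat.eq_zero_or_pos m with hm | hm
  · subst hm
    haveI : IsEmpty (Fin 0) := inferInstance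
    have hz : ∀ t, e t = 0 := fun t => Subsingleton.elim _ _
    constructor
    · intro t ht
      rw [hz t, hz 0]
      simp [dotProduct]
    · have : e = fun _ => 0 := funext hz
      rw [this]
      exact tendsto_const_nhds
  obtain ⟨hSpos, hUB, hIpos, hLB⟩ := quad_bounds hm P hP
  set lM := sSup (spectrum ℝ P) with hlM
  set lI := sInf (spectrum ℝ P) with hlI
  have hmaxEig : maxEig P = lM := rfl
  set c := (κ - 2 * μ) / lM with hc
  have hcneg : c < 0 := div_neg_of_neg_of_pos (by linarith) hSpos
  set V : ℝ → ℝ := fun t => e t ⬝ᵥ P.mulVec (e t) with hV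
  -- The derivative of V
  set dV : ℝ → ℝ := fun t =>
    (M.mulVec (e t) + g t) ⬝ᵥ P.mulVec (e t) + e t ⬝ᵥ P.mulVec (M.mulVec (e t) + g t) with hdV
  have hVd : ∀ t ≥ (0:ℝ), HasDerivAt V (dV t) t := fun t ht =>
    hasDerivAt_quad P e _ t (he t ht)
  -- the derivative bound dV t ≤ c * V t
  have hVle : ∀ t ≥ (0:ℝ), dV t ≤ c * V t := by
    intro t ht
    have hsym : g t ⬝ᵥ P.mulVec (e t) = e t ⬝ᵥ P.mulVec (g t) := by
      rw [symm_shift P hP.1, dotProduct_comm]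
    have hM1 : (M.mulVec (e t)) ⬝ᵥ P.mulVec (e t) = e t ⬝ᵥ (Mᵀ * P).mulVec (e t) := by
      rw [← mulVec_mulVec, dotProduct_mulVec (e t) Mᵀ, ← mulVec_transpose, transpose_transpose]
    have hM2 : e t ⬝ᵥ P.mulVec (M.mulVec (e t)) = e t ⬝ᵥ (P * M).mulVec (e t) := by
      rw [← mulVec_mulVec]
    have hquad : e t ⬝ᵥ (Mᵀ * P).mulVec (e t) + e t ⬝ᵥ (P * M).mulVec (e t)
        = -(2 * μ) * (e t ⬝ᵥ e t) := by
      have : e t ⬝ᵥ ((P * M + Mᵀ * P).mulVec (e t)) = -(2 * μ) * (e t ⬝ᵥ e t) := by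
        rw [hLyap]
        simp [smul_mulVec, one_mulVec, neg_mulVec, dotProduct_neg, dotProduct_smul,
          smul_eq_mul]
      rw [add_mulVec, dotProduct_add] at this
      linarith
    have hexp : dV t = -(2 * μ) * (e t ⬝ᵥ e t) + 2 * (e t ⬝ᵥ P.mulVec (g t)) := by
      simp only [hdV, add_dotProduct, dotProduct_add, mulVec_add]
      rw [hsym] at *
      rw [hM1, hM2] at *
      linarith [hquad]
    have h1 : dV t ≤ (κ - 2 * μ) * (e t ⬝ᵥ e t) := by
      have := hg t ht
      rw [hexp]
      nlinarith
    have h2 : (κ - 2 * μ) * (e t ⬝ᵥ e t) ≤ c * V t := by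
      have hVub : V t ≤ lM * (e t ⬝ᵥ e t) := hUB (e t)
      have := mul_le_mul_of_nonpos_left hVub (le_of_lt hcneg)
      have hcl : c * lM = κ - 2 * μ := div_mul_cancel₀ _ (ne_of_gt hSpos)
      calc (κ - 2 * μ) * (e t ⬝ᵥ e t) = c * (lM * (e t ⬝ᵥ e t)) := by
            rw [← mul_assoc, hcl]
        _ ≤ c * V t := this
    linarith
  -- Gronwall via the auxiliary function W
  set W : ℝ → ℝ := fun t => Real.exp (-c * t) * V t with hW
  have hWd : ∀ t ≥ (0:ℝ), HasDerivAt W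
      (Real.exp (-c * t) * (-c) * V t + Real.exp (-c * t) * dV t) t := by
    intro t ht
    have h1 : HasDerivAt (fun s => Real.exp (-c * s)) (Real.exp (-c * t) * (-c)) t := by
      have : HasDerivAt (fun s : ℝ => -c * s) (-c) t := by
        simpa using (hasDerivAt_id t).const_mul (-c)
      exact this.exp
    exact h1.mul (hVd t ht)
  have hWanti : AntitoneOn W (Set.Ici (0:ℝ)) := by
    apply antitoneOn_of_deriv_nonpos (convex_Ici 0)
    · intro t ht
      exact ((hWd t ht).continuousAt).continuousWithinAt
    · intro t ht
      rw [interior_Ici] at ht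
      exact ((hWd t (le_of_lt ht)).differentiableAt).differentiableWithinAt
    · intro t ht
      rw [interior_Ici] at ht
      have ht' : (0:ℝ) ≤ t := le_of_lt ht
      rw [(hWd t ht').deriv]
      have hEpos : (0:ℝ) < Real.exp (-c * t) := Real.exp_pos _
      have h1 : Real.exp (-c * t) * dV t ≤ Real.exp (-c * t) * (c * V t) :=
        mul_le_mul_of_nonneg_left (hVle t ht') (le_of_lt hEpos)
      have h2 : Real.exp (-c * t) * (-c) * V t + Real.exp (-c * t) * (c * V t) = 0 := by ring
      linarith
  have hVbound : ∀ t ≥ (0:ℝ), V t ≤ Real.exp (c * t) * V 0 := by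
    intro t ht
    have := hWanti (Set.self_mem_Ici) ht ht
    simp only [hW] at this
    rw [mul_zero, Real.exp_zero, one_mul] at this
    -- this : exp (-c * t) * V t ≤ V 0
    have hE : (0:ℝ) < Real.exp (c * t) := Real.exp_pos _
    have := mul_le_mul_of_nonneg_left this (le_of_lt hE)
    calc V t = Real.exp (c * t) * (Real.exp (-c * t) * V t) := by
          rw [← mul_assoc, ← Real.exp_add]
          simp
      _ ≤ Real.exp (c * t) * V 0 := this
  constructor
  · intro t ht
    have := hVbound t ht
    rw [hmaxEig]
    exact this
  · -- tendsto
    have hV0 : 0 ≤ V 0 := by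
      have := hLB (e 0)
      have hss : 0 ≤ e 0 ⬝ᵥ e 0 := by
        simpa [dotProduct] using Finset.sum_nonneg fun j (_ : j ∈ Finset.univ) => mul_self_nonneg (e 0 j)
      nlinarith
    have hBtend : Filter.Tendsto (fun t => Real.exp (c * t) * V 0 / lI)
        Filter.atTop (nhds 0) := by
      have h1 : Filter.Tendsto (fun t : ℝ => c * t) Filter.atTop Filter.atBot :=
        (Filter.tendsto_const_mul_atBot_of_neg hcneg).mpr Filter.tendsto_id
      have h2 : Filter.Tendsto (fun t => Real.exp (c * t)) Filter.atTop (nhds 0) :=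
        Real.tendsto_exp_atBot.comp h1
      have h3 := h2.mul_const (V 0 / lI)
      simpa [mul_div_assoc, zero_mul] using h3
    rw [tendsto_pi_nhds]
    intro i
    have habs : Filter.Tendsto (fun t => |e t i|) Filter.atTop (nhds 0) := by
      apply squeeze_zero' (g := fun t => Real.sqrt (Real.exp (c * t) * V 0 / lI))
      · exact Filter.Eventually.of_forall fun t => abs_nonneg _
      · filter_upwards [Filter.eventually_ge_atTop (0:ℝ)] with t ht
        have hsq : (e t i)^2 ≤ Real.exp (c * t) * V 0 / lI := by
          have h1 : (e t i)^2 ≤ e t ⬝ᵥ e t := quad_single_le (e t) i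
          have h2 : lI * (e t ⬝ᵥ e t) ≤ V t := hLB (e t)
          have h3 : V t ≤ Real.exp (c * t) * V 0 := hVbound t ht
          rw [le_div_iff₀ hIpos]
          nlinarith
        calc |e t i| = Real.sqrt ((e t i)^2) := (Real.sqrt_sq_eq_abs _).symm
          _ ≤ _ := Real.sqrt_le_sqrt hsq
      · have := (Real.continuous_sqrt.tendsto 0).comp hBtend
        simpa [Function.comp_def] using this
    exact (tendsto_zero_iff_abs_tendsto_zero _).2 habs
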